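/- Let d ≥ 2 and let q ∈ ℝ[x₁,x₂,x₃] be homogeneous of degree d−1 whose monomials with negative coefficient are exactly two distinct monomials x^{B¹} and x^{B²}, and which has exactly P monomials with positive coefficient. Suppose every coefficient of s·q = (x₁+x₂+x₃)·q is nonnegative, and suppose the least common multiple of x^{B¹} and x^{B²} has degree at least d+1 (equivalently, the graded Betti number β_{1,d} of the ideal ⟨x^{B¹}, x^{B²}⟩ vanishes). Then P ≥ 5 and ρ(s·q) ≥ 6. -/

import Mathlib

open MvPolynomial

namespace SosTwoNeg

/-! ### Finsupp / coefficient helpers -/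

lemma sub_add_single (m : Fin 3 →₀ ℕ) (i : Fin 3) (h : i ∈ m.support) :
    m - Finsupp.single i 1 + Finsupp.single i 1 = m := by
  rw [Finsupp.mem_support_iff] at h
  ext x
  simp only [Finsupp.add_apply, Finsupp.tsub_apply, Finsupp.single_apply]
  split_ifs with hx
  · subst hx; omega
  · omega

lemma coeff_sq (q : MvPolynomial (Fin 3) ℝ) (m : Fin 3 →₀ ℕ) :
    ((X 0 + X 1 + X 2) * q).coeff m =
      ∑ i : Fin 3, if i ∈ m.support then q.coeff (m - Finsupp.single i 1) else 0 := by
  rw [add_mul, add_mul, coeff_add, coeff_add, coeff_X_mul', coeff_X_mul', coeff_X_mul',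
    Fin.sum_univ_three]

lemma exists_witness (q : MvPolynomial (Fin 3) ℝ)
    (hnonneg : ∀ m : Fin 3 →₀ ℕ, 0 ≤ ((X 0 + X 1 + X 2) * q).coeff m)
    (B : Fin 3 →₀ ℕ) (hB : q.coeff B < 0) (k : Fin 3) :
    ∃ w i, i ≠ k ∧ w + Finsupp.single i 1 = B + Finsupp.single k 1 ∧ 0 < q.coeff w := by
  set m := B + Finsupp.single k 1 with hm
  set f : Fin 3 → ℝ := fun i => if i ∈ m.support then q.coeff (m - Finsupp.single i 1) else 0
    with hf
  have hmem : k ∈ m.support := by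
    rw [Finsupp.mem_support_iff]
    simp [hm, Finsupp.add_apply, Finsupp.single_apply]
  have hsubk : m - Finsupp.single k 1 = B := add_tsub_cancel_right _ _
  have h0 := hnonneg m
  rw [coeff_sq] at h0
  have hk : f k = q.coeff B := by rw [hf]; simp only [if_pos hmem, hsubk]
  have key : ∃ i, i ≠ k ∧ 0 < f i := by
    by_contra hc
    push_neg at hc
    have hsum : ∑ i : Fin 3, f i = f k + ∑ i ∈ Finset.univ.erase k, f i :=
      (Finset.add_sum_erase _ _ (Finset.mem_univ k)).symm
    have hle : ∑ i ∈ Finset.univ.erase k, f i ≤ 0 :=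
      Finset.sum_nonpos fun i hi => hc i (Finset.ne_of_mem_erase hi)
    rw [hsum, hk] at h0
    linarith
  obtain ⟨i, hik, hpos⟩ := key
  have himem : i ∈ m.support := by
    by_contra hni; rw [hf] at hpos; simp only [if_neg hni] at hpos; exact lt_irrefl _ hpos
  rw [hf] at hpos; simp only [if_pos himem] at hpos
  exact ⟨m - Finsupp.single i 1, i, hik, by rw [sub_add_single m i himem], hpos⟩

lemma mem_supp_sq (q : MvPolynomial (Fin 3) ℝ) (B1 B2 : Fin 3 →₀ ℕ)
    (hneg' : ∀ m, q.coeff m < 0 → m = B1 ∨ m = B2)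
    (w : Fin 3 →₀ ℕ) (j : Fin 3) (hw : 0 < q.coeff w)
    (h1 : ∀ l, w + Finsupp.single j 1 ≠ B1 + Finsupp.single l 1)
    (h2 : ∀ l, w + Finsupp.single j 1 ≠ B2 + Finsupp.single l 1) :
    w + Finsupp.single j 1 ∈ ((X 0 + X 1 + X 2) * q).support := by
  set m := w + Finsupp.single j 1 with hm
  have hjm : j ∈ m.support := by
    rw [Finsupp.mem_support_iff]
    simp [hm, Finsupp.add_apply, Finsupp.single_apply]
  have hsubj : m - Finsupp.single j 1 = w := add_tsub_cancel_right _ _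
  rw [mem_support_iff]
  have hpos : 0 < ((X 0 + X 1 + X 2) * q).coeff m := by
    rw [coeff_sq]
    apply Finset.sum_pos'
    · intro i _
      split_ifs with hi
      · by_contra hlt
        push_neg at hlt
        rcases hneg' _ hlt with hB | hB
        · exact h1 i (by rw [← sub_add_single m i hi, hB])
        · exact h2 i (by rw [← sub_add_single m i hi, hB])
      · exact le_refl 0
    · exact ⟨j, Finset.mem_univ j, by rw [if_pos hjm, hsubj]; exact hw⟩
  exact ne_of_gt hpos

/-! ### sum lemmas -/

lemma ssum1 (k : Fin 3) : ∑ x : Fin 3, (Finsupp.single k 1 : Fin 3 →₀ ℕ) x = 1 := by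
  simp [Finsupp.single_apply]

lemma ssum2 (a b : Fin 3) :
    ∑ x : Fin 3, (Finsupp.single a 1 + Finsupp.single b 1 : Fin 3 →₀ ℕ) x = 2 := by
  simp only [Finsupp.add_apply, Finset.sum_add_distrib, ssum1]

lemma ssum3 (a b c : Fin 3) :
    ∑ x : Fin 3,
      (Finsupp.single a 1 + Finsupp.single b 1 + Finsupp.single c 1 : Fin 3 →₀ ℕ) x = 3 := by
  simp only [Finsupp.add_apply, Finset.sum_add_distrib, ssum1]

lemma sum_max_le (B B' u u' : Fin 3 →₀ ℕ) (h : B + u = B' + u') :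
    ∑ x : Fin 3, max (B x) (B' x) ≤ (∑ x : Fin 3, B' x) + ∑ x : Fin 3, u' x := by
  rw [← Finset.sum_add_distrib]
  apply Finset.sum_le_sum
  intro x _
  have hx := DFunLike.congr_fun h x
  simp only [Finsupp.add_apply] at hx
  exact max_le (by omega) (by omega)

lemma fin3_pigeon (a b c d : Fin 3) (h1 : a ≠ b) (h2 : a ≠ c) (h3 : a ≠ d)
    (h4 : b ≠ c) (h5 : b ≠ d) (h6 : c ≠ d) : False := by
  fin_cases a <;> fin_cases b <;> fin_cases c <;> fin_cases d <;> simp_all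

/-! ### the collision lemma -/

lemma collision {D : ℕ} (B1 B2 : Fin 3 →₀ ℕ)
    (hs2 : ∑ x : Fin 3, B2 x = D)
    (hmax : D + 2 ≤ ∑ x : Fin 3, max (B1 x) (B2 x))
    (k1 i1 k1' i1' k2 i2 k2' i2' : Fin 3)
    (h11 : i1 ≠ k1)
    (hk : k1 ≠ k2) (hk' : k1' ≠ k2')
    (e1 : B1 + (Finsupp.single k1 1 + Finsupp.single i1' 1)
        = B2 + (Finsupp.single k1' 1 + Finsupp.single i1 1))
    (e2 : B1 + (Finsupp.single k2 1 + Finsupp.single i2' 1)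
        = B2 + (Finsupp.single k2' 1 + Finsupp.single i2 1)) : False := by
  classical
  set u1 : Fin 3 →₀ ℕ := Finsupp.single k1 1 + Finsupp.single i1' 1 with hu1
  set u1' : Fin 3 →₀ ℕ := Finsupp.single k1' 1 + Finsupp.single i1 1 with hu1'
  set u2 : Fin 3 →₀ ℕ := Finsupp.single k2 1 + Finsupp.single i2' 1 with hu2
  set u2' : Fin 3 →₀ ℕ := Finsupp.single k2' 1 + Finsupp.single i2 1 with hu2'
  have p1 : ∀ x, B1 x + u1 x = B2 x + u1' x := fun x => by
    have := DFunLike.congr_fun e1 x; simpa [Finsupp.add_apply] using this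
  have p2 : ∀ x, B1 x + u2 x = B2 x + u2' x := fun x => by
    have := DFunLike.congr_fun e2 x; simpa [Finsupp.add_apply] using this
  have hqmax : ∀ (u u' : Fin 3 →₀ ℕ), (∀ x, B1 x + u x = B2 x + u' x) →
      (∑ x : Fin 3, u x = 2) → (∑ x : Fin 3, u' x = 2) →
      ∀ x, u x = 0 ∨ u' x = 0 := by
    intro u u' p hsu hsu'
    have hle : ∀ x ∈ Finset.univ (α := Fin 3), max (B1 x) (B2 x) ≤ B2 x + u' x := by
      intro x _; have := p x; exact max_le (by omega) (by omega)
    have hsum : ∑ x : Fin 3, (B2 x + u' x) = D + 2 := by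
      rw [Finset.sum_add_distrib, hs2, hsu']
    have heq : ∀ x ∈ Finset.univ (α := Fin 3), max (B1 x) (B2 x) = B2 x + u' x := by
      apply (Finset.sum_eq_sum_iff_of_le hle).mp
      have := Finset.sum_le_sum hle
      rw [hsum] at this ⊢
      omega
    intro x
    have h1 := heq x (Finset.mem_univ x)
    have h2 := p x
    have h3 := max_choice (B1 x) (B2 x)
    omega
  have m1 := hqmax u1 u1' p1 (ssum2 _ _) (ssum2 _ _)
  have m2 := hqmax u2 u2' p2 (ssum2 _ _) (ssum2 _ _)
  have cmb : ∀ x, u1 x = u2 x ∧ u1' x = u2' x := by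
    intro x
    have := p1 x; have := p2 x; have := m1 x; have := m2 x
    omega
  have ev : ∀ (a b x : Fin 3), (Finsupp.single a 1 + Finsupp.single b 1 : Fin 3 →₀ ℕ) x
      = (if a = x then 1 else 0) + (if b = x then 1 else 0) := by
    intro a b x; simp [Finsupp.add_apply, Finsupp.single_apply]
  have hz1 : u1' k1 = 0 := by
    rcases m1 k1 with h | h
    · exfalso; rw [hu1, ev] at h; simp at h
    · exact h
  have hak1 : k1' ≠ k1 := by
    intro hh; rw [hu1', ev, if_pos hh] at hz1; omega
  have hz2 : u1' i1' = 0 := by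
    rcases m1 i1' with h | h
    · exfalso; rw [hu1, ev] at h; simp at h
    · exact h
  have hbk : k1' ≠ i1' := by
    intro hh; rw [hu1', ev, if_pos hh] at hz2; omega
  have hbi : i1 ≠ i1' := by
    intro hh
    rw [hu1', ev, if_pos hh] at hz2; omega
  have hab : k1 ≠ i1' := by
    intro hh
    have h2 := (cmb k1).1
    rw [hu1, hu2, ev, ev, if_pos rfl, if_pos hh.symm] at h2
    have : k2 = k1 := by
      by_contra hnk
      rw [if_neg hnk] at h2
      split_ifs at h2 <;> omega
    exact hk this.symm
  have hcd : k1' ≠ i1 := by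
    intro hh
    have h2 := (cmb k1').2
    rw [hu1', hu2', ev, ev, if_pos rfl, if_pos hh.symm] at h2
    have : k2' = k1' := by
      by_contra hnk
      rw [if_neg hnk] at h2
      split_ifs at h2 <;> omega
    exact hk' this.symm
  exact fin3_pigeon k1 i1' k1' i1 hab hak1.symm h11.symm hbk.symm hbi.symm hcd

/-! ### the finite model -/

abbrev V3 := ℕ × ℕ × ℕ
def madd (p q : V3) : V3 := (p.1 + q.1, p.2.1 + q.2.1, p.2.2 + q.2.2)
def msub (p q : V3) : V3 := (p.1 - q.1, p.2.1 - q.2.1, p.2.2 - q.2.2)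
def mE : Fin 3 → V3 := ![(1,0,0), (0,1,0), (0,0,1)]
def shifts (p : V3) : List V3 := [madd p (mE 0), madd p (mE 1), madd p (mE 2)]
def nes (b1 b2 : V3) : List V3 := shifts b1 ++ shifts b2
def tlist (ws : List V3) (b1 b2 : V3) : List V3 :=
  (ws.map shifts).flatten.filter fun z => !decide (z ∈ nes b1 b2)
def jlist : Fin 3 → List (Fin 3) := ![[1,2], [0,2], [0,1]]
def opts (β : V3) (k : Fin 3) : List V3 := (jlist k).map fun j => msub (madd β (mE k)) (mE j)
def check (b1 b2 : V3) : Bool :=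
  (opts b1 0).all fun w1 => w1 == b1 || w1 == b2 ||
  ((opts b1 1).all fun w2 => w2 == b1 || w2 == b2 ||
  ((opts b1 2).all fun w3 => w3 == b1 || w3 == b2 ||
  ((opts b2 0).all fun w4 => w4 == b1 || w4 == b2 ||
  ((opts b2 1).all fun w5 => w5 == b1 || w5 == b2 ||
  ((opts b2 2).all fun w6 => w6 == b1 || w6 == b2 ||
    decide (6 ≤ (tlist [w1,w2,w3,w4,w5,w6] b1 b2).dedup.length))))))

set_option maxRecDepth 10000 in
lemma model : ∀ a b c a' b' c' : Fin 4,
    (a.val = 0 ∨ a'.val = 0) → (b.val = 0 ∨ b'.val = 0) → (c.val = 0 ∨ c'.val = 0) →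
    a.val + b.val + c.val = a'.val + b'.val + c'.val →
    (a.val + b.val + c.val = 2 ∨ a.val + b.val + c.val = 3) →
    check (a.val+1, b.val+1, c.val+1) (a'.val+1, b'.val+1, c'.val+1) = true := by decide

lemma model' (a b c a' b' c' : ℕ) (ha : a < 4) (hb : b < 4) (hc : c < 4)
    (ha' : a' < 4) (hb' : b' < 4) (hc' : c' < 4)
    (h1 : a = 0 ∨ a' = 0) (h2 : b = 0 ∨ b' = 0) (h3 : c = 0 ∨ c' = 0)
    (h4 : a + b + c = a' + b' + c') (h5 : a + b + c = 2 ∨ a + b + c = 3) :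
    check (a+1, b+1, c+1) (a'+1, b'+1, c'+1) = true :=
  model ⟨a, ha⟩ ⟨b, hb⟩ ⟨c, hc⟩ ⟨a', ha'⟩ ⟨b', hb'⟩ ⟨c', hc'⟩ h1 h2 h3 h4 h5

/-! ### bridge -/

def phi (t : Fin 3 → ℕ) (p : Fin 3 →₀ ℕ) : V3 :=
  (p 0 + 1 - t 0, p 1 + 1 - t 1, p 2 + 1 - t 2)

lemma phi_add (t : Fin 3 → ℕ) (p : Fin 3 →₀ ℕ) (hp : ∀ x, t x ≤ p x + 1) (j : Fin 3) :
    phi t (p + Finsupp.single j 1) = madd (phi t p) (mE j) := by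
  have h0 := hp 0; have h1 := hp 1; have h2 := hp 2
  fin_cases j <;>
    simp [phi, madd, mE, Finsupp.add_apply, Finsupp.single_apply, Prod.ext_iff] <;>
    omega

lemma phi_inj (t : Fin 3 → ℕ) (p p' : Fin 3 →₀ ℕ) (hp : ∀ x, t x ≤ p x + 1)
    (hp' : ∀ x, t x ≤ p' x + 1) (h : phi t p = phi t p') : p = p' := by
  have h0 := hp 0; have h1 := hp 1; have h2 := hp 2
  have h0' := hp' 0; have h1' := hp' 1; have h2' := hp' 2
  rw [phi, phi, Prod.ext_iff, Prod.ext_iff] at h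
  obtain ⟨e0, e1, e2⟩ := h
  dsimp only at e0 e1 e2
  ext x
  fin_cases x
  · exact (show p 0 = p' 0 by omega)
  · exact (show p 1 = p' 1 by omega)
  · exact (show p 2 = p' 2 by omega)

lemma mem_jlist (j k : Fin 3) (h : j ≠ k) : j ∈ jlist k := by
  fin_cases j <;> fin_cases k <;> simp_all [jlist]

lemma mem_opts (β ω : V3) (k j : Fin 3) (hjk : j ≠ k)
    (h : madd ω (mE j) = madd β (mE k)) : ω ∈ opts β k := by
  have hval : ω = msub (madd β (mE k)) (mE j) := by
    obtain ⟨a, b, c⟩ := ω; obtain ⟨a', b', c'⟩ := β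
    fin_cases j <;> fin_cases k <;>
      simp_all [madd, msub, mE, Prod.ext_iff] <;> omega
  exact List.mem_map.mpr ⟨j, mem_jlist j k hjk, hval.symm⟩

lemma madd_mem_shifts (β : V3) (l : Fin 3) : madd β (mE l) ∈ shifts β := by
  fin_cases l <;> simp [shifts]

/-! ### six distinct elements -/

lemma six_le_card {α : Type*} [DecidableEq α] {s : Finset α} {a b c d e f : α}
    (ha : a ∈ s) (hb : b ∈ s) (hc : c ∈ s) (hd : d ∈ s) (he : e ∈ s) (hf : f ∈ s)
    (h1 : a ≠ b) (h2 : a ≠ c) (h3 : a ≠ d) (h4 : a ≠ e) (h5 : a ≠ f)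
    (h6 : b ≠ c) (h7 : b ≠ d) (h8 : b ≠ e) (h9 : b ≠ f)
    (h10 : c ≠ d) (h11 : c ≠ e) (h12 : c ≠ f)
    (h13 : d ≠ e) (h14 : d ≠ f) (h15 : e ≠ f) : 6 ≤ s.card := by
  classical
  have hn : ([a, b, c, d, e, f] : List α).Nodup := by
    simp [h1, h2, h3, h4, h5, h6, h7, h8, h9, h10, h11, h12, h13, h14, h15]
  have hsub : ([a, b, c, d, e, f] : List α).toFinset ⊆ s := by
    intro x hx
    simp only [List.toFinset_cons, List.toFinset_nil, Finset.insert_empty, Finset.mem_insert,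
      Finset.mem_singleton] at hx
    rcases hx with rfl | rfl | rfl | rfl | rfl | rfl <;> assumption
  have hcard := List.toFinset_card_of_nodup hn
  have := Finset.card_le_card hsub
  simp only [hcard] at this ⊢
  simpa using this

end SosTwoNeg


open SosTwoNeg Finsupp

set_option maxHeartbeats 2000000 in
/-- **Proposition 3.7: signature pair `(P,2)` with `β_{1,d} = 0`.**
Let `q ∈ ℝ[x₁,x₂,x₃]` be homogeneous of degree `d−1` whose monomials with
negative coefficient are exactly `x^{B¹} ≠ x^{B²}`, with exactly `P` monomials
of positive coefficient.  Suppose every coefficient of `s·q = (x₁+x₂+x₃)·q`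
is nonnegative, and that `deg lcm(x^{B¹}, x^{B²}) = ∑ᵢ max(B¹ᵢ,B²ᵢ) ≥ d+1`
(i.e. `β_{1,d} = 0` for `⟨x^{B¹}, x^{B²}⟩`).  Then `P ≥ 5` and `ρ(s·q) ≥ 6`. -/
theorem sos_two_negatives_high_syzygy
    {d : ℕ} (hd : 2 ≤ d)
    (q : MvPolynomial (Fin 3) ℝ)
    (hq : q.IsHomogeneous (d - 1))
    (B1 B2 : Fin 3 →₀ ℕ) (hBne : B1 ≠ B2)
    (hneg : (q.support.filter fun m => q.coeff m < 0) = {B1, B2})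
    (P : ℕ)
    (hP : (q.support.filter fun m => 0 < q.coeff m).card = P)
    (hnonneg : ∀ m : Fin 3 →₀ ℕ, 0 ≤ ((X 0 + X 1 + X 2) * q).coeff m)
    (hlcm : d + 1 ≤ ∑ i : Fin 3, max (B1 i) (B2 i)) :
    5 ≤ P ∧ 6 ≤ ((X 0 + X 1 + X 2) * q).support.card := by
  classical
  -- signs of the two negative monomials
  have hb1 : q.coeff B1 < 0 := by
    have h : B1 ∈ q.support.filter fun m => q.coeff m < 0 := by
      rw [hneg]; simp
    exact (Finset.mem_filter.mp h).2
  have hb2 : q.coeff B2 < 0 := by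
    have h : B2 ∈ q.support.filter fun m => q.coeff m < 0 := by
      rw [hneg]; simp
    exact (Finset.mem_filter.mp h).2
  have hneg' : ∀ m, q.coeff m < 0 → m = B1 ∨ m = B2 := by
    intro m hm
    have h : m ∈ q.support.filter fun m => q.coeff m < 0 :=
      Finset.mem_filter.mpr ⟨MvPolynomial.mem_support_iff.mpr (ne_of_lt hm), hm⟩
    rw [hneg] at h
    simpa using h
  -- degrees
  have hsB : ∀ B : Fin 3 →₀ ℕ, q.coeff B ≠ 0 → ∑ x : Fin 3, B x = d - 1 := by
    intro B h
    have hw := hq h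
    rw [Finsupp.weight_apply, Finsupp.sum_fintype] at hw
    · simpa using hw
    · intro; simp
  have hs1 : ∑ x : Fin 3, B1 x = d - 1 := hsB B1 (ne_of_lt hb1)
  have hs2 : ∑ x : Fin 3, B2 x = d - 1 := hsB B2 (ne_of_lt hb2)
  have hmax : (d - 1) + 2 ≤ ∑ x : Fin 3, max (B1 x) (B2 x) := by
    have : (∑ i : Fin 3, max (B1 i) (B2 i)) = ∑ x : Fin 3, max (B1 x) (B2 x) := rfl
    omega
  -- witnesses
  choose w1 i1 hi1 hr1 hp1 using fun k => exists_witness q hnonneg B1 hb1 k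
  choose w2 i2 hi2 hr2 hp2 using fun k => exists_witness q hnonneg B2 hb2 k
  -- injectivity of the witness families
  have winj : ∀ (B : Fin 3 →₀ ℕ) (w : Fin 3 → Fin 3 →₀ ℕ) (i : Fin 3 → Fin 3),
      (∀ k, i k ≠ k) → (∀ k, w k + Finsupp.single (i k) 1 = B + Finsupp.single k 1) →
      Function.Injective w := by
    intro B w i hi hr k k' h
    by_contra hne
    have e : B + Finsupp.single k 1 + Finsupp.single (i k') 1
           = B + Finsupp.single k' 1 + Finsupp.single (i k) 1 := by
      rw [← hr k, ← hr k', h]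
      abel
    have e' : Finsupp.single k 1 + Finsupp.single (i k') 1
            = Finsupp.single k' 1 + Finsupp.single (i k) 1 := by
      rwa [add_assoc, add_assoc, add_right_inj] at e
    have h2 := DFunLike.congr_fun e' k
    simp only [Finsupp.add_apply, Finsupp.single_apply] at h2
    split_ifs at h2 <;>
      first
        | omega
        | exact absurd ‹k' = k› (fun hh => hne hh.symm)
        | exact absurd ‹i k = k› (hi k)
  have winj1 : Function.Injective w1 := winj B1 w1 i1 hi1 hr1
  have winj2 : Function.Injective w2 := winj B2 w2 i2 hi2 hr2
  -- all witnesses are positive-coefficient monomials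
  set Pos := q.support.filter fun m => 0 < q.coeff m with hPos
  set im1 := Finset.image w1 Finset.univ with him1
  set im2 := Finset.image w2 Finset.univ with him2
  have hsubPos : im1 ∪ im2 ⊆ Pos := by
    intro x hx
    rcases Finset.mem_union.mp hx with hx | hx <;>
      obtain ⟨k, -, rfl⟩ := Finset.mem_image.mp hx
    · exact Finset.mem_filter.mpr ⟨MvPolynomial.mem_support_iff.mpr (hp1 k).ne', hp1 k⟩
    · exact Finset.mem_filter.mpr ⟨MvPolynomial.mem_support_iff.mpr (hp2 k).ne', hp2 k⟩
  have hcard1 : im1.card = 3 := by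
    rw [him1, Finset.card_image_of_injective _ winj1]; simp
  have hcard2 : im2.card = 3 := by
    rw [him2, Finset.card_image_of_injective _ winj2]; simp
  have hinter : (im1 ∩ im2).card ≤ 1 := by
    rw [Finset.card_le_one]
    intro a ha b hb
    obtain ⟨ha1, ha2⟩ := Finset.mem_inter.mp ha
    obtain ⟨hb1', hb2'⟩ := Finset.mem_inter.mp hb
    obtain ⟨k1, -, hak1⟩ := Finset.mem_image.mp ha1
    obtain ⟨k1', -, hak1'⟩ := Finset.mem_image.mp ha2
    obtain ⟨k2, -, hbk2⟩ := Finset.mem_image.mp hb1'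
    obtain ⟨k2', -, hbk2'⟩ := Finset.mem_image.mp hb2'
    by_contra hab
    have hkk : k1 ≠ k2 := by
      intro hh; exact hab (by rw [← hak1, ← hbk2, hh])
    have hkk' : k1' ≠ k2' := by
      intro hh; exact hab (by rw [← hak1', ← hbk2', hh])
    have e1 : B1 + (Finsupp.single k1 1 + Finsupp.single (i2 k1') 1)
            = B2 + (Finsupp.single k1' 1 + Finsupp.single (i1 k1) 1) := by
      have : (B1 + Finsupp.single k1 1) + Finsupp.single (i2 k1') 1
           = (B2 + Finsupp.single k1' 1) + Finsupp.single (i1 k1) 1 := by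
        rw [← hr1 k1, ← hr2 k1', hak1, hak1']
        abel
      rwa [add_assoc, add_assoc] at this
    have e2 : B1 + (Finsupp.single k2 1 + Finsupp.single (i2 k2') 1)
            = B2 + (Finsupp.single k2' 1 + Finsupp.single (i1 k2) 1) := by
      have : (B1 + Finsupp.single k2 1) + Finsupp.single (i2 k2') 1
           = (B2 + Finsupp.single k2' 1) + Finsupp.single (i1 k2) 1 := by
        rw [← hr1 k2, ← hr2 k2', hbk2, hbk2']
        abel
      rwa [add_assoc, add_assoc] at this
    exact collision B1 B2 hs2 hmax k1 (i1 k1) k1' (i2 k1') k2 (i1 k2) k2' (i2 k2')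
      (hi1 k1) hkk hkk' e1 e2
  have hP5 : 5 ≤ P := by
    rw [← hP]
    have hu := Finset.card_union_add_card_inter im1 im2
    have := Finset.card_le_card hsubPos
    omega
  refine ⟨hP5, ?_⟩
  -- Part 2
  rcases le_or_gt (∑ x : Fin 3, max (B1 x) (B2 x)) ((d - 1) + 3) with hnearS | hfarS
  · -- near case : use the finite model
    set t : Fin 3 → ℕ := fun x => min (B1 x) (B2 x) with ht
    have htB1 : ∀ x, t x ≤ B1 x := fun x => min_le_left _ _
    have htB2 : ∀ x, t x ≤ B2 x := fun x => min_le_right _ _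
    have domB1 : ∀ x, t x ≤ B1 x + 1 := fun x => le_trans (htB1 x) (Nat.le_succ _)
    have domB2 : ∀ x, t x ≤ B2 x + 1 := fun x => le_trans (htB2 x) (Nat.le_succ _)
    have domw1 : ∀ k x, t x ≤ w1 k x + 1 := by
      intro k x
      have hpt := DFunLike.congr_fun (hr1 k) x
      simp only [Finsupp.add_apply, Finsupp.single_apply] at hpt
      have := htB1 x
      split_ifs at hpt <;> omega
    have domw2 : ∀ k x, t x ≤ w2 k x + 1 := by
      intro k x
      have hpt := DFunLike.congr_fun (hr2 k) x
      simp only [Finsupp.add_apply, Finsupp.single_apply] at hpt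
      have := htB2 x
      split_ifs at hpt <;> omega
    -- arithmetic facts
    have hmm : ∀ x, max (B1 x) (B2 x) + t x = B1 x + B2 x := by
      intro x; simp only [ht]; exact max_add_min _ _
    have hch0 : ∀ x, t x = B1 x ∨ t x = B2 x := by
      intro x; simp only [ht]; exact min_choice _ _
    rw [Fin.sum_univ_three] at hs1 hs2 hmax hnearS
    have hmm0 := hmm 0; have hmm1 := hmm 1; have hmm2 := hmm 2
    have hc0 := hch0 0; have hc1 := hch0 1; have hc2 := hch0 2
    have ht0 := htB1 0; have ht1 := htB1 1; have ht2 := htB1 2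
    have ht0' := htB2 0; have ht1' := htB2 1; have ht2' := htB2 2
    -- apply the model lemma
    have hphi1 : phi t B1 = ((B1 0 - t 0) + 1, (B1 1 - t 1) + 1, (B1 2 - t 2) + 1) := by
      simp only [phi, Prod.mk.injEq]
      refine ⟨by omega, by omega, by omega⟩
    have hphi2 : phi t B2 = ((B2 0 - t 0) + 1, (B2 1 - t 1) + 1, (B2 2 - t 2) + 1) := by
      simp only [phi, Prod.mk.injEq]
      refine ⟨by omega, by omega, by omega⟩
    have hch : check (phi t B1) (phi t B2) = true := by
      rw [hphi1, hphi2]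
      exact model' (B1 0 - t 0) (B1 1 - t 1) (B1 2 - t 2)
        (B2 0 - t 0) (B2 1 - t 1) (B2 2 - t 2)
        (by omega) (by omega) (by omega) (by omega) (by omega) (by omega)
        (by omega) (by omega) (by omega) (by omega) (by omega)
    -- witnesses in the model
    have hwB : ∀ w : Fin 3 →₀ ℕ, 0 < q.coeff w → w ≠ B1 ∧ w ≠ B2 := by
      intro w hw
      constructor <;> intro h <;> rw [h] at hw <;> linarith
    have hmo1 : ∀ k, phi t (w1 k) ∈ opts (phi t B1) k := fun k =>
      mem_opts _ _ k (i1 k) (hi1 k)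
        (by rw [← phi_add t (w1 k) (domw1 k) (i1 k), ← phi_add t B1 domB1 k, hr1 k])
    have hmo2 : ∀ k, phi t (w2 k) ∈ opts (phi t B2) k := fun k =>
      mem_opts _ _ k (i2 k) (hi2 k)
        (by rw [← phi_add t (w2 k) (domw2 k) (i2 k), ← phi_add t B2 domB2 k, hr2 k])
    have hne1 : ∀ k, (phi t (w1 k) == phi t B1) = false := fun k =>
      beq_eq_false_iff_ne.mpr fun h =>
        (hwB (w1 k) (hp1 k)).1 (phi_inj t _ _ (domw1 k) domB1 h)
    have hne1' : ∀ k, (phi t (w1 k) == phi t B2) = false := fun k =>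
      beq_eq_false_iff_ne.mpr fun h =>
        (hwB (w1 k) (hp1 k)).2 (phi_inj t _ _ (domw1 k) domB2 h)
    have hne2 : ∀ k, (phi t (w2 k) == phi t B1) = false := fun k =>
      beq_eq_false_iff_ne.mpr fun h =>
        (hwB (w2 k) (hp2 k)).1 (phi_inj t _ _ (domw2 k) domB1 h)
    have hne2' : ∀ k, (phi t (w2 k) == phi t B2) = false := fun k =>
      beq_eq_false_iff_ne.mpr fun h =>
        (hwB (w2 k) (hp2 k)).2 (phi_inj t _ _ (domw2 k) domB2 h)
    -- extract the length bound
    unfold check at hch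
    have s1 := List.all_eq_true.mp hch _ (hmo1 0)
    rw [hne1 0, hne1' 0] at s1
    simp only [Bool.false_or] at s1
    have s2 := List.all_eq_true.mp s1 _ (hmo1 1)
    rw [hne1 1, hne1' 1] at s2
    simp only [Bool.false_or] at s2
    have s3 := List.all_eq_true.mp s2 _ (hmo1 2)
    rw [hne1 2, hne1' 2] at s3
    simp only [Bool.false_or] at s3
    have s4 := List.all_eq_true.mp s3 _ (hmo2 0)
    rw [hne2 0, hne2' 0] at s4
    simp only [Bool.false_or] at s4
    have s5 := List.all_eq_true.mp s4 _ (hmo2 1)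
    rw [hne2 1, hne2' 1] at s5
    simp only [Bool.false_or] at s5
    have s6 := List.all_eq_true.mp s5 _ (hmo2 2)
    rw [hne2 2, hne2' 2] at s6
    simp only [Bool.false_or] at s6
    have hlen : 6 ≤ (tlist [phi t (w1 0), phi t (w1 1), phi t (w1 2),
        phi t (w2 0), phi t (w2 1), phi t (w2 2)] (phi t B1) (phi t B2)).dedup.length :=
      of_decide_eq_true s6
    -- the elements of the model T-list come from the support
    have hsubim : (tlist [phi t (w1 0), phi t (w1 1), phi t (w1 2),
        phi t (w2 0), phi t (w2 1), phi t (w2 2)] (phi t B1) (phi t B2)).toFinset ⊆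
        Finset.image (phi t) ((X 0 + X 1 + X 2) * q).support := by
      intro z hz
      rw [List.mem_toFinset] at hz
      unfold tlist at hz
      obtain ⟨hz1, hz2⟩ := List.mem_filter.mp hz
      have hz2' : z ∉ nes (phi t B1) (phi t B2) := by simpa using hz2
      obtain ⟨L, hL, hzL⟩ := List.mem_flatten.mp hz1
      obtain ⟨ω, hω, rfl⟩ := List.mem_map.mp hL
      have hωex : ∃ w : Fin 3 →₀ ℕ, ω = phi t w ∧ 0 < q.coeff w ∧ ∀ x, t x ≤ w x + 1 := by
        simp only [List.mem_cons, List.not_mem_nil, or_false] at hω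
        rcases hω with rfl | rfl | rfl | rfl | rfl | rfl
        exacts [⟨w1 0, rfl, hp1 0, domw1 0⟩, ⟨w1 1, rfl, hp1 1, domw1 1⟩,
          ⟨w1 2, rfl, hp1 2, domw1 2⟩, ⟨w2 0, rfl, hp2 0, domw2 0⟩,
          ⟨w2 1, rfl, hp2 1, domw2 1⟩, ⟨w2 2, rfl, hp2 2, domw2 2⟩]
      obtain ⟨w, rfl, hwpos, hwdom⟩ := hωex
      have hzj : ∃ j : Fin 3, z = madd (phi t w) (mE j) := by
        simp only [shifts, List.mem_cons, List.not_mem_nil, or_false] at hzL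
        rcases hzL with rfl | rfl | rfl
        exacts [⟨0, rfl⟩, ⟨1, rfl⟩, ⟨2, rfl⟩]
      obtain ⟨j, rfl⟩ := hzj
      have hzphi : madd (phi t w) (mE j) = phi t (w + Finsupp.single j 1) :=
        (phi_add t w hwdom j).symm
      have havoid : ∀ B : Fin 3 →₀ ℕ, (phi t B = phi t B1 ∨ phi t B = phi t B2) →
          (∀ x, t x ≤ B x + 1) →
          ∀ l, w + Finsupp.single j 1 ≠ B + Finsupp.single l 1 := by
        intro B hB hdomB l heq
        apply hz2'
        rw [hzphi, heq, phi_add t B hdomB l]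
        rcases hB with hB | hB <;> rw [hB]
        · exact List.mem_append_left _ (madd_mem_shifts _ l)
        · exact List.mem_append_right _ (madd_mem_shifts _ l)
      have hmem := mem_supp_sq q B1 B2 hneg' w j hwpos
        (havoid B1 (Or.inl rfl) domB1) (havoid B2 (Or.inr rfl) domB2)
      rw [hzphi]
      exact Finset.mem_image.mpr ⟨_, hmem, rfl⟩
    have hcardt := List.card_toFinset (tlist [phi t (w1 0), phi t (w1 1), phi t (w1 2),
        phi t (w2 0), phi t (w2 1), phi t (w2 2)] (phi t B1) (phi t B2))
    have hle1 := Finset.card_le_card hsubim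
    have hle2 := Finset.card_image_le (s := ((X 0 + X 1 + X 2) * q).support) (f := phi t)
    omega
  · -- far case : six explicit elements  w_b k + e_k
    have hsame : ∀ (B w : Fin 3 →₀ ℕ) (k i : Fin 3), i ≠ k → 0 < q.coeff w →
        q.coeff B < 0 → w + Finsupp.single i 1 = B + Finsupp.single k 1 →
        ∀ l, w + Finsupp.single k 1 ≠ B + Finsupp.single l 1 := by
      intro B w k i hik hw hB hrel l heq
      by_cases hlk : l = k
      · subst hlk
        have hwB : w = B := add_right_cancel heq
        rw [hwB] at hw; linarith
      · have e : B + (Finsupp.single l 1 + Finsupp.single i 1)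
               = B + (Finsupp.single k 1 + Finsupp.single k 1) := by
          calc B + (Finsupp.single l 1 + Finsupp.single i 1)
              = (B + Finsupp.single l 1) + Finsupp.single i 1 := by rw [add_assoc]
            _ = (w + Finsupp.single k 1) + Finsupp.single i 1 := by rw [heq]
            _ = (w + Finsupp.single i 1) + Finsupp.single k 1 := by abel
            _ = (B + Finsupp.single k 1) + Finsupp.single k 1 := by rw [hrel]
            _ = B + (Finsupp.single k 1 + Finsupp.single k 1) := by rw [add_assoc]
        have e' := add_left_cancel e
        have h2 := DFunLike.congr_fun e' k
        simp only [Finsupp.add_apply, Finsupp.single_apply] at h2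
        split_ifs at h2 <;> first | omega | exact hlk ‹l = k› | exact hik ‹i = k›
    have hcross1 : ∀ k l : Fin 3, w1 k + Finsupp.single k 1 ≠ B2 + Finsupp.single l 1 := by
      intro k l heq
      have e : B2 + (Finsupp.single l 1 + Finsupp.single (i1 k) 1)
             = B1 + (Finsupp.single k 1 + Finsupp.single k 1) := by
        calc B2 + (Finsupp.single l 1 + Finsupp.single (i1 k) 1)
            = (B2 + Finsupp.single l 1) + Finsupp.single (i1 k) 1 := by rw [add_assoc]
          _ = (w1 k + Finsupp.single k 1) + Finsupp.single (i1 k) 1 := by rw [heq]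
          _ = (w1 k + Finsupp.single (i1 k) 1) + Finsupp.single k 1 := by abel
          _ = (B1 + Finsupp.single k 1) + Finsupp.single k 1 := by rw [hr1 k]
          _ = B1 + (Finsupp.single k 1 + Finsupp.single k 1) := by rw [add_assoc]
      have hle := sum_max_le B2 B1 _ _ e
      rw [hs1, ssum2] at hle
      have hcomm : ∑ x : Fin 3, max (B2 x) (B1 x) = ∑ x : Fin 3, max (B1 x) (B2 x) :=
        Finset.sum_congr rfl fun x _ => max_comm _ _
      omega
    have hcross2 : ∀ k l : Fin 3, w2 k + Finsupp.single k 1 ≠ B1 + Finsupp.single l 1 := by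
      intro k l heq
      have e : B1 + (Finsupp.single l 1 + Finsupp.single (i2 k) 1)
             = B2 + (Finsupp.single k 1 + Finsupp.single k 1) := by
        calc B1 + (Finsupp.single l 1 + Finsupp.single (i2 k) 1)
            = (B1 + Finsupp.single l 1) + Finsupp.single (i2 k) 1 := by rw [add_assoc]
          _ = (w2 k + Finsupp.single k 1) + Finsupp.single (i2 k) 1 := by rw [heq]
          _ = (w2 k + Finsupp.single (i2 k) 1) + Finsupp.single k 1 := by abel
          _ = (B2 + Finsupp.single k 1) + Finsupp.single k 1 := by rw [hr2 k]
          _ = B2 + (Finsupp.single k 1 + Finsupp.single k 1) := by rw [add_assoc]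
      have hle := sum_max_le B1 B2 _ _ e
      rw [hs2, ssum2] at hle
      omega
    have hdw : ∀ (w : Fin 3 → Fin 3 →₀ ℕ) (i : Fin 3 → Fin 3) (B : Fin 3 →₀ ℕ),
        (∀ k, i k ≠ k) → (∀ k, w k + Finsupp.single (i k) 1 = B + Finsupp.single k 1) →
        ∀ k k', k ≠ k' → w k + Finsupp.single k 1 ≠ w k' + Finsupp.single k' 1 := by
      intro w i B hi hr k k' hkk heq
      have e : B + (Finsupp.single k 1 + Finsupp.single k 1 + Finsupp.single (i k') 1)
             = B + (Finsupp.single k' 1 + Finsupp.single k' 1 + Finsupp.single (i k) 1) := by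
        calc B + (Finsupp.single k 1 + Finsupp.single k 1 + Finsupp.single (i k') 1)
            = ((B + Finsupp.single k 1) + Finsupp.single k 1) + Finsupp.single (i k') 1 := by
              rw [add_assoc, add_assoc, add_assoc]
          _ = ((w k + Finsupp.single (i k) 1) + Finsupp.single k 1) + Finsupp.single (i k') 1 := by
              rw [hr k]
          _ = ((w k + Finsupp.single k 1) + Finsupp.single (i k) 1) + Finsupp.single (i k') 1 := by
              abel
          _ = ((w k' + Finsupp.single k' 1) + Finsupp.single (i k) 1) + Finsupp.single (i k') 1 := by
              rw [heq]
          _ = ((w k' + Finsupp.single (i k') 1) + Finsupp.single k' 1) + Finsupp.single (i k) 1 := by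
              abel
          _ = ((B + Finsupp.single k' 1) + Finsupp.single k' 1) + Finsupp.single (i k) 1 := by
              rw [hr k']
          _ = B + (Finsupp.single k' 1 + Finsupp.single k' 1 + Finsupp.single (i k) 1) := by
              rw [add_assoc, add_assoc, add_assoc]
      have e' := add_left_cancel e
      have h2 := DFunLike.congr_fun e' k
      simp only [Finsupp.add_apply, Finsupp.single_apply] at h2
      split_ifs at h2 <;>
        first | omega | exact hkk (‹k' = k›).symm | exact (hi k) ‹i k = k›
    have hdc : ∀ k k' : Fin 3, w1 k + Finsupp.single k 1 ≠ w2 k' + Finsupp.single k' 1 := by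
      intro k k' heq
      have e : B1 + (Finsupp.single k 1 + Finsupp.single k 1 + Finsupp.single (i2 k') 1)
             = B2 + (Finsupp.single k' 1 + Finsupp.single k' 1 + Finsupp.single (i1 k) 1) := by
        calc B1 + (Finsupp.single k 1 + Finsupp.single k 1 + Finsupp.single (i2 k') 1)
            = ((B1 + Finsupp.single k 1) + Finsupp.single k 1) + Finsupp.single (i2 k') 1 := by
              rw [add_assoc, add_assoc, add_assoc]
          _ = ((w1 k + Finsupp.single (i1 k) 1) + Finsupp.single k 1) + Finsupp.single (i2 k') 1 := by
              rw [hr1 k]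
          _ = ((w1 k + Finsupp.single k 1) + Finsupp.single (i1 k) 1) + Finsupp.single (i2 k') 1 := by
              abel
          _ = ((w2 k' + Finsupp.single k' 1) + Finsupp.single (i1 k) 1) + Finsupp.single (i2 k') 1 := by
              rw [heq]
          _ = ((w2 k' + Finsupp.single (i2 k') 1) + Finsupp.single k' 1) + Finsupp.single (i1 k) 1 := by
              abel
          _ = ((B2 + Finsupp.single k' 1) + Finsupp.single k' 1) + Finsupp.single (i1 k) 1 := by
              rw [hr2 k']
          _ = B2 + (Finsupp.single k' 1 + Finsupp.single k' 1 + Finsupp.single (i1 k) 1) := by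
              rw [add_assoc, add_assoc, add_assoc]
      have hle := sum_max_le B1 B2 _ _ e
      rw [hs2, ssum3] at hle
      omega
    have hm1 : ∀ k, w1 k + Finsupp.single k 1 ∈ ((X 0 + X 1 + X 2) * q).support := fun k =>
      mem_supp_sq q B1 B2 hneg' (w1 k) k (hp1 k)
        (hsame B1 (w1 k) k (i1 k) (hi1 k) (hp1 k) hb1 (hr1 k)) (hcross1 k)
    have hm2 : ∀ k, w2 k + Finsupp.single k 1 ∈ ((X 0 + X 1 + X 2) * q).support := fun k =>
      mem_supp_sq q B1 B2 hneg' (w2 k) k (hp2 k) (hcross2 k)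
        (hsame B2 (w2 k) k (i2 k) (hi2 k) (hp2 k) hb2 (hr2 k))
    exact six_le_card (hm1 0) (hm1 1) (hm1 2) (hm2 0) (hm2 1) (hm2 2)
      (hdw w1 i1 B1 hi1 hr1 0 1 (by decide)) (hdw w1 i1 B1 hi1 hr1 0 2 (by decide))
      (hdc 0 0) (hdc 0 1) (hdc 0 2)
      (hdw w1 i1 B1 hi1 hr1 1 2 (by decide))
      (hdc 1 0) (hdc 1 1) (hdc 1 2)
      (hdc 2 0) (hdc 2 1) (hdc 2 2)
      (hdw w2 i2 B2 hi2 hr2 0 1 (by decide)) (hdw w2 i2 B2 hi2 hr2 0 2 (by decide))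
      (hdw w2 i2 B2 hi2 hr2 1 2 (by decide))
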